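/- Let f, a be real numbers with |f| < |a|, and let g(f, a) = −log(cosh(a) − cosh(f)). Then the Hessian matrix of g at (f, a), i.e. the 2×2 matrix with entries ∂²g/∂f², ∂²g/∂f∂a, ∂²g/∂a∂f, ∂²g/∂a², is positive definite; its determinant equals 1/(cosh(a) − cosh(f))² and its trace equals 2·(cosh(a)·cosh(f) − 1)/(cosh(a) − cosh(f))². -/

import Mathlib

open Real

private lemma derivFst (b u : ℝ) (h : Real.cosh b - Real.cosh u ≠ 0) :
    HasDerivAt (fun v => -Real.log (Real.cosh b - Real.cosh v))
      (Real.sinh u / (Real.cosh b - Real.cosh u)) u := by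
  have h1 : HasDerivAt (fun v => Real.cosh b - Real.cosh v) (-Real.sinh u) u :=
    (Real.hasDerivAt_cosh u).const_sub (Real.cosh b)
  have h2 : HasDerivAt (fun v => -Real.log (Real.cosh b - Real.cosh v)) _ u := (h1.log h).neg
  convert h2 using 1
  ring

private lemma derivSnd (b u : ℝ) (h : Real.cosh b - Real.cosh u ≠ 0) :
    HasDerivAt (fun w => -Real.log (Real.cosh w - Real.cosh u))
      (-Real.sinh b / (Real.cosh b - Real.cosh u)) b := by
  have h1 : HasDerivAt (fun w : ℝ => Real.cosh w - Real.cosh u) (Real.sinh b) b :=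
    (Real.hasDerivAt_cosh b).sub_const (Real.cosh u)
  have h2 : HasDerivAt (fun w => -Real.log (Real.cosh w - Real.cosh u)) _ b := (h1.log h).neg
  convert h2 using 1
  ring

theorem hessian_free_energy (f a : ℝ) (h : |f| < |a|) :
    let g : ℝ → ℝ → ℝ := fun u v => -Real.log (Real.cosh v - Real.cosh u)
    let H : Matrix (Fin 2) (Fin 2) ℝ :=
      !![deriv (fun u => deriv (fun v => g v a) u) f,
         deriv (fun u => deriv (fun w => g u w) a) f;
         deriv (fun w => deriv (fun v => g v w) f) a,
         deriv (fun w => deriv (fun v => g f v) w) a]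
    H.PosDef ∧ H.det = 1 / (Real.cosh a - Real.cosh f)^2
      ∧ H.trace = 2 * (Real.cosh a * Real.cosh f - 1) / (Real.cosh a - Real.cosh f)^2 := by
  intro g H
  have hD : Real.cosh f < Real.cosh a := Real.cosh_lt_cosh.mpr h
  have hDpos : 0 < Real.cosh a - Real.cosh f := sub_pos.mpr hD
  have hDne : Real.cosh a - Real.cosh f ≠ 0 := ne_of_gt hDpos
  have hsf : Real.sinh f ^ 2 = Real.cosh f ^ 2 - 1 := by
    nlinarith [Real.cosh_sq_sub_sinh_sq f]
  have hsa : Real.sinh a ^ 2 = Real.cosh a ^ 2 - 1 := by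
    nlinarith [Real.cosh_sq_sub_sinh_sq a]
  have hcf1 : (1 : ℝ) ≤ Real.cosh f := Real.one_le_cosh f
  have hca1 : (1 : ℝ) ≤ Real.cosh a := Real.one_le_cosh a
  have hev1 : ∀ᶠ u in nhds f, 0 < Real.cosh a - Real.cosh u := by
    have hc : ContinuousAt (fun u => Real.cosh a - Real.cosh u) f :=
      (continuousAt_const.sub Real.continuous_cosh.continuousAt)
    exact hc.eventually (eventually_gt_nhds hDpos)
  have hev2 : ∀ᶠ w in nhds a, 0 < Real.cosh w - Real.cosh f := by
    have hc : ContinuousAt (fun w => Real.cosh w - Real.cosh f) a :=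
      (Real.continuous_cosh.continuousAt.sub continuousAt_const)
    exact hc.eventually (eventually_gt_nhds hDpos)
  have h1f : HasDerivAt (fun u => Real.cosh a - Real.cosh u) (-Real.sinh f) f :=
    (Real.hasDerivAt_cosh f).const_sub (Real.cosh a)
  have h1a : HasDerivAt (fun w : ℝ => Real.cosh w - Real.cosh f) (Real.sinh a) a :=
    (Real.hasDerivAt_cosh a).sub_const (Real.cosh f)
  -- Entry (0,0)
  have e00 : deriv (fun u => deriv (fun v => g v a) u) f
      = (Real.cosh a * Real.cosh f - 1) / (Real.cosh a - Real.cosh f) ^ 2 := by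
    have heq : (fun u => deriv (fun v => g v a) u)
        =ᶠ[nhds f] (fun u => Real.sinh u / (Real.cosh a - Real.cosh u)) := by
      filter_upwards [hev1] with u hu
      exact (derivFst a u (ne_of_gt hu)).deriv
    rw [heq.deriv_eq]
    have hd : HasDerivAt (fun u => Real.sinh u / (Real.cosh a - Real.cosh u)) _ f :=
      (Real.hasDerivAt_sinh f).div h1f hDne
    rw [hd.deriv, div_eq_div_iff (by positivity) (by positivity)]
    nlinarith [hsf]
  -- Entry (0,1)
  have e01 : deriv (fun u => deriv (fun w => g u w) a) f
      = -(Real.sinh a * Real.sinh f) / (Real.cosh a - Real.cosh f) ^ 2 := by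
    have heq : (fun u => deriv (fun w => g u w) a)
        =ᶠ[nhds f] (fun u => -Real.sinh a / (Real.cosh a - Real.cosh u)) := by
      filter_upwards [hev1] with u hu
      exact (derivSnd a u (ne_of_gt hu)).deriv
    rw [heq.deriv_eq]
    have hd : HasDerivAt (fun u => -Real.sinh a / (Real.cosh a - Real.cosh u)) _ f :=
      (hasDerivAt_const f (-Real.sinh a)).div h1f hDne
    rw [hd.deriv]; ring_nf
  -- Entry (1,0)
  have e10 : deriv (fun w => deriv (fun v => g v w) f) a
      = -(Real.sinh a * Real.sinh f) / (Real.cosh a - Real.cosh f) ^ 2 := by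
    have heq : (fun w => deriv (fun v => g v w) f)
        =ᶠ[nhds a] (fun w => Real.sinh f / (Real.cosh w - Real.cosh f)) := by
      filter_upwards [hev2] with w hw
      exact (derivFst w f (ne_of_gt hw)).deriv
    rw [heq.deriv_eq]
    have hd : HasDerivAt (fun w => Real.sinh f / (Real.cosh w - Real.cosh f)) _ a :=
      (hasDerivAt_const a (Real.sinh f)).div h1a hDne
    rw [hd.deriv]; ring_nf
  -- Entry (1,1)
  have e11 : deriv (fun w => deriv (fun v => g f v) w) a
      = (Real.cosh a * Real.cosh f - 1) / (Real.cosh a - Real.cosh f) ^ 2 := by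
    have heq : (fun w => deriv (fun v => g f v) w)
        =ᶠ[nhds a] (fun w => -Real.sinh w / (Real.cosh w - Real.cosh f)) := by
      filter_upwards [hev2] with w hw
      exact (derivSnd w f (ne_of_gt hw)).deriv
    rw [heq.deriv_eq]
    have hd : HasDerivAt (fun w => -Real.sinh w / (Real.cosh w - Real.cosh f)) _ a :=
      ((Real.hasDerivAt_sinh a).neg).div h1a hDne
    rw [Pi.neg_apply] at hd
    rw [hd.deriv, div_eq_div_iff (by positivity) (by positivity)]
    nlinarith [hsa]
  obtain ⟨A, hA⟩ : ∃ A : ℝ,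
      A = (Real.cosh a * Real.cosh f - 1) / (Real.cosh a - Real.cosh f) ^ 2 := ⟨_, rfl⟩
  obtain ⟨B, hB⟩ : ∃ B : ℝ,
      B = -(Real.sinh a * Real.sinh f) / (Real.cosh a - Real.cosh f) ^ 2 := ⟨_, rfl⟩
  have hHval : H = !![A, B; B, A] := by
    simp only [H, e00, e01, e10, e11, hA, hB]
  have hApos : 0 < A := by
    rw [hA]; apply div_pos _ (by positivity); nlinarith
  have hdet : A * A - B ^ 2 = 1 / (Real.cosh a - Real.cosh f) ^ 2 := by
    have hB2 : B ^ 2 = (Real.cosh a ^ 2 - 1) * (Real.cosh f ^ 2 - 1)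
        / ((Real.cosh a - Real.cosh f) ^ 2 * (Real.cosh a - Real.cosh f) ^ 2) := by
      rw [hB, ← hsa, ← hsf, div_pow, neg_sq, mul_pow]
      congr 1
      ring
    rw [hA, hB2, div_mul_div_comm, div_sub_div _ _ (by positivity) (by positivity),
      div_eq_div_iff (by positivity) (by positivity)]
    ring
  have hdetpos : 0 < A * A - B ^ 2 := by rw [hdet]; positivity
  refine ⟨?_, ?_, ?_⟩
  · rw [hHval]
    rw [Matrix.posDef_iff_dotProduct_mulVec]
    constructor
    · ext i j
      fin_cases i <;> fin_cases j <;> simp [Matrix.conjTranspose, Matrix.transpose]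
    · intro x hx
      have hx' : x 0 ≠ 0 ∨ x 1 ≠ 0 := by
        by_contra hcon
        push_neg at hcon
        apply hx
        ext i; fin_cases i <;> simp [hcon.1, hcon.2]
      simp only [dotProduct, Pi.star_apply, Matrix.mulVec, Fin.sum_univ_two, Matrix.cons_val',
        Matrix.cons_val_zero, Matrix.cons_val_one, Matrix.head_cons, Matrix.empty_val',
        Matrix.cons_val_fin_one, Matrix.head_fin_const, star_trivial, Matrix.of_apply]
      rcases hx' with h0 | h1
      · nlinarith [sq_nonneg (A * x 1 + B * x 0), sq_nonneg (x 1), hApos,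
          mul_pos hdetpos (sq_pos_of_ne_zero h0)]
      · nlinarith [sq_nonneg (A * x 0 + B * x 1), sq_nonneg (x 0), hApos,
          mul_pos hdetpos (sq_pos_of_ne_zero h1)]
  · rw [hHval, Matrix.det_fin_two_of]
    calc A * A - B * B = A * A - B ^ 2 := by ring
    _ = 1 / (Real.cosh a - Real.cosh f) ^ 2 := hdet
  · rw [hHval, Matrix.trace_fin_two_of, hA]
    ring
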